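/- Let A be an n×n positive-semidefinite matrix over ℝ or ℂ, and let Ω and Ω' be n×k matrices with range(Ω) = range(Ω'). Then the Nyström approximations coincide: AΩ((Ω*AΩ)†)Ω*A = AΩ'((Ω'*AΩ')†)Ω'*A. That is, the Nyström approximation depends on the test matrix Ω only through its range. -/

import Mathlib

open Matrix MeasureTheory ProbabilityTheory
open scoped ENNReal NNReal ComplexOrder Classical

namespace PsdSketch

variable {𝕜 : Type*} [RCLike 𝕜]

/-- The four Penrose conditions characterizing the Moore–Penrose pseudoinverse. -/
def IsMoorePenrose {m k : ℕ} (M : Matrix (Fin m) (Fin k) 𝕜)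
    (X : Matrix (Fin k) (Fin m) 𝕜) : Prop :=
  M * X * M = M ∧ X * M * X = X ∧ (M * X)ᴴ = M * X ∧ (X * M)ᴴ = X * M

/-- The Moore–Penrose pseudoinverse `M†` (the unique matrix satisfying the
Penrose conditions). -/
noncomputable def pinv {m k : ℕ} (M : Matrix (Fin m) (Fin k) 𝕜) :
    Matrix (Fin k) (Fin m) 𝕜 :=
  if h : ∃ X, IsMoorePenrose M X then h.choose else 0

/-- The Nyström approximation `Â = A Ω ((Ω* A Ω)†) Ω* A`. -/
noncomputable def nystrom {n k : ℕ} (A : Matrix (Fin n) (Fin n) 𝕜)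
    (Ω : Matrix (Fin n) (Fin k) 𝕜) : Matrix (Fin n) (Fin n) 𝕜 :=
  A * Ω * pinv (Ωᴴ * A * Ω) * Ωᴴ * A

/-- The `i`-th singular value of a square matrix, 0-indexed and listed in weakly
decreasing order (so `sval M 0 = σ₁(M)`), with `sval M i = 0` for `i ≥ n`. -/
noncomputable def sval {n : ℕ} (M : Matrix (Fin n) (Fin n) 𝕜) (i : ℕ) : ℝ :=
  if h : i < n then
    Real.sqrt
      ((Matrix.posSemidef_conjTranspose_mul_self M).1.eigenvalues
        (Tuple.sort (Matrix.posSemidef_conjTranspose_mul_self M).1.eigenvalues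
          (Fin.rev ⟨i, h⟩)))
  else 0

/-- The Schatten `p`-norm: the `ℓ_p` norm of the vector of singular values. -/
noncomputable def schatten {n : ℕ} (p : ℝ≥0∞) (M : Matrix (Fin n) (Fin n) 𝕜) : ℝ :=
  if p = ∞ then sval M 0
  else (∑ i ∈ Finset.range n, sval M i ^ p.toReal) ^ (1 / p.toReal)

/-- `σ_{r+1}^{(p)}(M)`, the optimal rank-`r` approximation error of `M` in the
Schatten `p`-norm: `(Σ_{i > r} σ_i(M)^p)^{1/p}` (for `p = ∞`, `σ_{r+1}(M)`). -/
noncomputable def tailNorm {n : ℕ} (p : ℝ≥0∞) (M : Matrix (Fin n) (Fin n) 𝕜)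
    (r : ℕ) : ℝ :=
  if p = ∞ then sval M r
  else (∑ i ∈ Finset.Ico r n, sval M i ^ p.toReal) ^ (1 / p.toReal)

/-- `B` is a (simultaneous) best rank-`r` approximation of `M` with respect to every
Schatten `p`-norm; this is the defining property of an `r`-truncated SVD `⟦M⟧_r`. -/
def IsBestRankApprox {n : ℕ} (M B : Matrix (Fin n) (Fin n) 𝕜) (r : ℕ) : Prop :=
  B.rank ≤ r ∧
    ∀ p : ℝ≥0∞, 1 ≤ p → ∀ C : Matrix (Fin n) (Fin n) 𝕜, C.rank ≤ r →
      schatten p (M - B) ≤ schatten p (M - C)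

/-- `⟦M⟧_r`: a best rank-`r` approximation of `M` (an `r`-truncated SVD). -/
noncomputable def truncate {n : ℕ} (M : Matrix (Fin n) (Fin n) 𝕜) (r : ℕ) :
    Matrix (Fin n) (Fin n) 𝕜 :=
  if h : ∃ B, IsBestRankApprox M B r then h.choose else 0

/-- The distribution of an `n × k` random matrix with independent standard normal
entries (matrices identified with functions `Fin n → Fin k → ℝ`). -/
noncomputable def gaussianEnsemble (n k : ℕ) : Measure (Fin n → Fin k → ℝ) :=
  Measure.pi fun _ => Measure.pi fun _ => gaussianReal 0 1

private lemma mp_unique {m k : ℕ} {M : Matrix (Fin m) (Fin k) 𝕜}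
    {X Y : Matrix (Fin k) (Fin m) 𝕜}
    (hX : IsMoorePenrose M X) (hY : IsMoorePenrose M Y) : X = Y := by
  obtain ⟨hX1, hX2, hX3, hX4⟩ := hX
  obtain ⟨hY1, hY2, hY3, hY4⟩ := hY
  have h1 : X = X * M * Y := by
    calc X = X * M * X := hX2.symm
    _ = X * (M * X) := by rw [Matrix.mul_assoc]
    _ = X * (M * X)ᴴ := by rw [hX3]
    _ = X * (M * Y * M * X)ᴴ := by rw [hY1]
    _ = X * (M * Y * (M * X))ᴴ := by rw [Matrix.mul_assoc (M * Y)]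
    _ = X * ((M * X)ᴴ * (M * Y)ᴴ) := by rw [conjTranspose_mul]
    _ = X * (M * X * (M * Y)) := by rw [hX3, hY3]
    _ = X * (M * X) * (M * Y) := by rw [← Matrix.mul_assoc X (M * X) (M * Y)]
    _ = X * M * X * (M * Y) := by rw [← Matrix.mul_assoc X M X]
    _ = X * (M * Y) := by rw [hX2]
    _ = X * M * Y := by rw [← Matrix.mul_assoc]
  have h2 : Y = X * M * Y := by
    calc Y = Y * M * Y := hY2.symm
    _ = (Y * M)ᴴ * Y := by rw [hY4]
    _ = (Y * (M * X * M))ᴴ * Y := by rw [hX1]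
    _ = (Y * M * (X * M))ᴴ * Y := by
        rw [← Matrix.mul_assoc Y (M * X) M, ← Matrix.mul_assoc Y M X, Matrix.mul_assoc (Y * M) X M]
    _ = ((X * M)ᴴ * (Y * M)ᴴ) * Y := by rw [conjTranspose_mul]
    _ = X * M * (Y * M) * Y := by rw [hX4, hY4]
    _ = X * M * (Y * M * Y) := by rw [Matrix.mul_assoc (X * M) (Y * M) Y]
    _ = X * M * Y := by rw [hY2]
  rw [h1, ← h2]

private lemma mp_exists {m : ℕ} {M : Matrix (Fin m) (Fin m) 𝕜} (hM : M.IsHermitian) :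
    ∃ X, IsMoorePenrose M X := by
  classical
  set U : Matrix (Fin m) (Fin m) 𝕜 := (hM.eigenvectorUnitary : Matrix (Fin m) (Fin m) 𝕜) with hUdef
  have hU1 : star U * U = 1 := Matrix.mem_unitaryGroup_iff'.mp hM.eigenvectorUnitary.2
  set F : (Fin m → ℝ) → Matrix (Fin m) (Fin m) 𝕜 :=
    fun f => U * diagonal (RCLike.ofReal ∘ f) * star U with hF
  have hmulF : ∀ f g, F f * F g = F (f * g) := by
    intro f g
    simp only [hF]
    rw [Matrix.mul_assoc (U * diagonal (RCLike.ofReal ∘ f)) (star U)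
        (U * diagonal (RCLike.ofReal ∘ g) * star U)]
    rw [← Matrix.mul_assoc (star U) (U * diagonal (RCLike.ofReal ∘ g)) (star U)]
    rw [← Matrix.mul_assoc (star U) U (diagonal (RCLike.ofReal ∘ g))]
    rw [hU1, Matrix.one_mul]
    rw [← Matrix.mul_assoc (U * diagonal (RCLike.ofReal ∘ f)) (diagonal (RCLike.ofReal ∘ g)) (star U)]
    rw [Matrix.mul_assoc U (diagonal (RCLike.ofReal ∘ f)) (diagonal (RCLike.ofReal ∘ g))]
    rw [diagonal_mul_diagonal]
    have : (fun i => (RCLike.ofReal (K := 𝕜) ∘ f) i * (RCLike.ofReal (K := 𝕜) ∘ g) i)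
        = RCLike.ofReal (K := 𝕜) ∘ (f * g) := by
      funext i
      simp only [Pi.mul_apply, Function.comp_apply, RCLike.ofReal_mul]
    rw [this]
  have hconjF : ∀ f, (F f)ᴴ = F f := by
    intro f
    simp only [hF]
    have hstar : star (RCLike.ofReal (K := 𝕜) ∘ f) = RCLike.ofReal (K := 𝕜) ∘ f := by
      funext i
      simp [RCLike.conj_ofReal]
    simp only [conjTranspose_mul, Matrix.star_eq_conjTranspose, conjTranspose_conjTranspose,
      diagonal_conjTranspose, hstar, Matrix.mul_assoc]
  have hmp : ∀ f : Fin m → ℝ, IsMoorePenrose (F f) (F f⁻¹) := by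
    intro f
    have key : ∀ g h : Fin m → ℝ, g = h → F g = F h := fun g h e => by rw [e]
    refine ⟨?_, ?_, ?_, ?_⟩
    · rw [hmulF, hmulF]
      refine key _ _ ?_
      funext i
      simp only [Pi.mul_apply, Pi.inv_apply]
      rcases eq_or_ne (f i) 0 with h | h
      · simp [h]
      · field_simp
    · rw [hmulF, hmulF]
      refine key _ _ ?_
      funext i
      simp only [Pi.mul_apply, Pi.inv_apply]
      rcases eq_or_ne (f i) 0 with h | h
      · simp [h]
      · field_simp
    · rw [hmulF, hconjF]
    · rw [hmulF, hconjF]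
  obtain ⟨d, hd⟩ : ∃ d : Fin m → ℝ, M = F d := ⟨hM.eigenvalues, hM.spectral_theorem⟩
  rw [hd]
  exact ⟨F d⁻¹, hmp d⟩

private lemma pinv_mp {m : ℕ} {M : Matrix (Fin m) (Fin m) 𝕜} (hM : M.IsHermitian) :
    IsMoorePenrose M (pinv M) := by
  rw [pinv, dif_pos (mp_exists hM)]
  exact (mp_exists hM).choose_spec

private lemma pinv_hermitian {m : ℕ} {M : Matrix (Fin m) (Fin m) 𝕜} (hM : M.IsHermitian) :
    (pinv M)ᴴ = pinv M := by
  obtain ⟨h1, h2, h3, h4⟩ := pinv_mp hM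
  refine mp_unique (M := M) ?_ (pinv_mp hM)
  have hMe : Mᴴ = M := hM
  refine ⟨?_, ?_, ?_, ?_⟩
  · calc M * (pinv M)ᴴ * M = (Mᴴ * pinv M * Mᴴ)ᴴ := by
          simp only [conjTranspose_mul, conjTranspose_conjTranspose, Matrix.mul_assoc]
    _ = M := by rw [hMe, h1, hMe]
  · calc (pinv M)ᴴ * M * (pinv M)ᴴ = (pinv M * Mᴴ * pinv M)ᴴ := by
          simp only [conjTranspose_mul, conjTranspose_conjTranspose, Matrix.mul_assoc]
    _ = (pinv M)ᴴ := by rw [hMe, h2]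
  · calc (M * (pinv M)ᴴ)ᴴ = pinv M * Mᴴ := by
          simp only [conjTranspose_mul, conjTranspose_conjTranspose]
    _ = (pinv M * M)ᴴ := by rw [h4, hMe]
    _ = Mᴴ * (pinv M)ᴴ := by rw [conjTranspose_mul]
    _ = M * (pinv M)ᴴ := by rw [hMe]
  · calc ((pinv M)ᴴ * M)ᴴ = Mᴴ * pinv M := by
          simp only [conjTranspose_mul, conjTranspose_conjTranspose]
    _ = (M * pinv M)ᴴ := by rw [h3, hMe]
    _ = (pinv M)ᴴ * Mᴴ := by rw [conjTranspose_mul]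
    _ = (pinv M)ᴴ * M := by rw [hMe]

private lemma mul_cancel_of_conjTranspose_mul {n k m : ℕ} (C : Matrix (Fin n) (Fin k) 𝕜)
    {X Y : Matrix (Fin k) (Fin m) 𝕜}
    (h : Cᴴ * C * X = Cᴴ * C * Y) : C * X = C * Y := by
  have h0 : Cᴴ * C * (X - Y) = 0 := by rw [Matrix.mul_sub, h, sub_self]
  have h1 : (C * (X - Y))ᴴ * (C * (X - Y)) = 0 := by
    rw [conjTranspose_mul, Matrix.mul_assoc, ← Matrix.mul_assoc Cᴴ C (X - Y), h0,
      Matrix.mul_zero]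
  have h2 := Matrix.conjTranspose_mul_self_eq_zero.mp h1
  rw [Matrix.mul_sub] at h2
  exact sub_eq_zero.mp h2

/-- The projector `P = C (CᴴC)† Cᴴ` fixes `C`. -/
private lemma proj_fix {n k : ℕ} (C : Matrix (Fin n) (Fin k) 𝕜) :
    C * pinv (Cᴴ * C) * Cᴴ * C = C := by
  obtain ⟨h1, h2, h3, h4⟩ := pinv_mp (isHermitian_conjTranspose_mul_self C)
  have key : Cᴴ * C * (pinv (Cᴴ * C) * (Cᴴ * C)) = Cᴴ * C * 1 := by
    rw [Matrix.mul_one, ← Matrix.mul_assoc, h1]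
  have := mul_cancel_of_conjTranspose_mul C key
  rw [Matrix.mul_one] at this
  calc C * pinv (Cᴴ * C) * Cᴴ * C
      = C * (pinv (Cᴴ * C) * (Cᴴ * C)) := by
        rw [Matrix.mul_assoc, Matrix.mul_assoc]
  _ = C := this

private lemma proj_herm {n k : ℕ} (C : Matrix (Fin n) (Fin k) 𝕜) :
    (C * pinv (Cᴴ * C) * Cᴴ)ᴴ = C * pinv (Cᴴ * C) * Cᴴ := by
  simp only [conjTranspose_mul, conjTranspose_conjTranspose,
    pinv_hermitian (isHermitian_conjTranspose_mul_self C), Matrix.mul_assoc]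

private lemma exists_factor {n k : ℕ} (C C' : Matrix (Fin n) (Fin k) 𝕜)
    (h : LinearMap.range C.mulVecLin ≤ LinearMap.range C'.mulVecLin) :
    ∃ T : Matrix (Fin k) (Fin k) 𝕜, C' * T = C := by
  have hcol : ∀ j, ∃ u, C'.mulVec u = C.mulVec (Pi.single j 1) := fun j =>
    h ⟨Pi.single j 1, rfl⟩
  choose u hu using hcol
  refine ⟨Matrix.of fun l j => u j l, ?_⟩
  ext i j
  have := congrFun (hu j) i
  simpa [Matrix.mul_apply, Matrix.mulVec, dotProduct, Pi.single_apply,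
    mul_comm] using this

private lemma proj_eq {n k : ℕ} (C C' : Matrix (Fin n) (Fin k) 𝕜)
    (h : LinearMap.range C.mulVecLin = LinearMap.range C'.mulVecLin) :
    C * pinv (Cᴴ * C) * Cᴴ = C' * pinv (C'ᴴ * C') * C'ᴴ := by
  obtain ⟨T, hT⟩ := exists_factor C C' h.le
  obtain ⟨T', hT'⟩ := exists_factor C' C h.ge
  have hP'C : C' * pinv (C'ᴴ * C') * C'ᴴ * C = C := by
    conv_lhs => rw [← hT]
    rw [← Matrix.mul_assoc, proj_fix, hT]
  have hPC' : C * pinv (Cᴴ * C) * Cᴴ * C' = C' := by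
    conv_lhs => rw [← hT']
    rw [← Matrix.mul_assoc, proj_fix, hT']
  have h1 : C' * pinv (C'ᴴ * C') * C'ᴴ * (C * pinv (Cᴴ * C) * Cᴴ)
      = C * pinv (Cᴴ * C) * Cᴴ := by
    calc C' * pinv (C'ᴴ * C') * C'ᴴ * (C * pinv (Cᴴ * C) * Cᴴ)
        = C' * pinv (C'ᴴ * C') * C'ᴴ * C * (pinv (Cᴴ * C) * Cᴴ) := by
          rw [Matrix.mul_assoc (C' * pinv (C'ᴴ * C') * C'ᴴ) C (pinv (Cᴴ * C) * Cᴴ),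
            ← Matrix.mul_assoc C (pinv (Cᴴ * C)) Cᴴ, Matrix.mul_assoc]
    _ = C * (pinv (Cᴴ * C) * Cᴴ) := by rw [hP'C]
    _ = C * pinv (Cᴴ * C) * Cᴴ := by rw [Matrix.mul_assoc]
  have h2 : C * pinv (Cᴴ * C) * Cᴴ * (C' * pinv (C'ᴴ * C') * C'ᴴ)
      = C' * pinv (C'ᴴ * C') * C'ᴴ := by
    calc C * pinv (Cᴴ * C) * Cᴴ * (C' * pinv (C'ᴴ * C') * C'ᴴ)
        = C * pinv (Cᴴ * C) * Cᴴ * C' * (pinv (C'ᴴ * C') * C'ᴴ) := by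
          rw [Matrix.mul_assoc (C * pinv (Cᴴ * C) * Cᴴ) C' (pinv (C'ᴴ * C') * C'ᴴ),
            ← Matrix.mul_assoc C' (pinv (C'ᴴ * C')) C'ᴴ, Matrix.mul_assoc]
    _ = C' * (pinv (C'ᴴ * C') * C'ᴴ) := by rw [hPC']
    _ = C' * pinv (C'ᴴ * C') * C'ᴴ := by rw [Matrix.mul_assoc]
  calc C * pinv (Cᴴ * C) * Cᴴ
      = (C' * pinv (C'ᴴ * C') * C'ᴴ * (C * pinv (Cᴴ * C) * Cᴴ))ᴴ := by
        rw [h1, proj_herm]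
  _ = (C * pinv (Cᴴ * C) * Cᴴ)ᴴ * (C' * pinv (C'ᴴ * C') * C'ᴴ)ᴴ := by
        rw [conjTranspose_mul]
  _ = C * pinv (Cᴴ * C) * Cᴴ * (C' * pinv (C'ᴴ * C') * C'ᴴ) := by
        rw [proj_herm, proj_herm]
  _ = C' * pinv (C'ᴴ * C') * C'ᴴ := h2

theorem stmt7 {𝕜 : Type*} [RCLike 𝕜] {n k : ℕ} (A : Matrix (Fin n) (Fin n) 𝕜)
    (hA : A.PosSemidef) (Ω Ω' : Matrix (Fin n) (Fin k) 𝕜)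
    (hrange : LinearMap.range Ω.mulVecLin = LinearMap.range Ω'.mulVecLin) :
    nystrom A Ω = nystrom A Ω' := by
  obtain ⟨B, hBsa, -, hBB0⟩ := open scoped MatrixOrder in
    CFC.exists_sqrt_of_isSelfAdjoint_of_quasispectrumRestricts hA.isHermitian
      (QuasispectrumRestricts.nnreal_of_nonneg hA.nonneg)
  have hB : Bᴴ = B := hBsa
  have hBB : B * B = A := hBB0
  have key : ∀ Ω₀ : Matrix (Fin n) (Fin k) 𝕜,
      nystrom A Ω₀ = B * ((B * Ω₀) * pinv ((B * Ω₀)ᴴ * (B * Ω₀)) * (B * Ω₀)ᴴ) * B := by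
    intro Ω₀
    have e2 : Ω₀ᴴ * A * Ω₀ = (B * Ω₀)ᴴ * (B * Ω₀) := by
      rw [← hBB]
      simp only [conjTranspose_mul, hB, Matrix.mul_assoc]
    rw [nystrom, e2, ← hBB]
    simp only [conjTranspose_mul, hB, Matrix.mul_assoc]
  have hr : LinearMap.range (B * Ω).mulVecLin = LinearMap.range (B * Ω').mulVecLin := by
    rw [Matrix.mulVecLin_mul, Matrix.mulVecLin_mul, LinearMap.range_comp,
      LinearMap.range_comp, hrange]
  rw [key Ω, key Ω', proj_eq _ _ hr]

end PsdSketch
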